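/- Let N ≥ 1, let K satisfy 0 ≤ K ≤ N, let γ ∈ [0,1), and let F : 2^{{1,…,N}} → ℝ. Consider the deterministic restless bandit on {0,1}^N with initial state s^{(0)} = (1,…,1) and s^{(t+1)} = (0,…,0) for every t ≥ 0 regardless of the action, and with reward R(s,a) = F({i : a_i = 1}) if s = (1,…,1) and R(s,a) = 0 otherwise. Then the supremum, over all action sequences (a^{(t)})_{t≥0} satisfying the budget constraint |{i : a^{(t)}_i = 1}| ≤ K at every time t, of the total discounted reward Σ_{t=0}^∞ γ^t R(s^{(t)}, a^{(t)}) equals max{ F(A) : A ⊆ {1,…,N}, |A| ≤ K }, and this supremum is attained by pulling a maximizing subset at time 0. -/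
import Mathlib


/-- Number of arms pulled by a binary action vector. -/
def pulls {N : ℕ} (a : Fin N → Bool) : ℕ := ∑ i, if a i then 1 else 0

/-- State trajectory of the reduction instance: all arms start in state 1 and all
arms are in state 0 at every later time, regardless of actions. -/
def trajOne (N : ℕ) : ℕ → Fin N → Bool
  | 0 => fun _ => true
  | _ + 1 => fun _ => false

lemma pulls_eq {N : ℕ} (a : Fin N → Bool) :
    pulls a = (Finset.univ.filter (fun i => a i = true)).card := by
  rw [pulls, Finset.card_filter]

lemma tsum_eq {N : ℕ} (hN : 1 ≤ N) (γ : ℝ) (a : ℕ → Fin N → Bool)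
    (F : Finset (Fin N) → ℝ) :
    (∑' t : ℕ, γ ^ t *
      (if trajOne N t = (fun _ : Fin N => true)
        then F (Finset.univ.filter (fun i => a t i = true)) else 0))
      = F (Finset.univ.filter (fun i => a 0 i = true)) := by
  rw [tsum_eq_single 0]
  · simp [trajOne]
  · intro t ht
    obtain ⟨n, rfl⟩ := Nat.exists_eq_succ_of_ne_zero ht
    have : trajOne N (n + 1) ≠ (fun _ : Fin N => true) := by
      intro h
      have := congrFun h ⟨0, hN⟩
      simp [trajOne] at this
    simp [this]

/-- Correctness of the reduction from cardinality-constrained submodular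
maximization: the optimal discounted reward of the constructed RMAB-G instance is
exactly `max { F(A) : |A| ≤ K }`, and it is attained. -/
theorem stmt_12 {N : ℕ} (hN : 1 ≤ N) (K : ℕ) (hK : K ≤ N)
    (γ : ℝ) (hγ0 : 0 ≤ γ) (hγ1 : γ < 1)
    (F : Finset (Fin N) → ℝ) :
    IsGreatest
      {x : ℝ | ∃ a : ℕ → Fin N → Bool, (∀ t, pulls (a t) ≤ K) ∧
        x = ∑' t : ℕ, γ ^ t *
          (if trajOne N t = (fun _ : Fin N => true)
            then F (Finset.univ.filter (fun i => a t i = true)) else 0)}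
      ((Finset.univ.powerset.filter (fun A : Finset (Fin N) => A.card ≤ K)).sup'
        ⟨∅, by simp⟩ F) := by
  constructor
  · obtain ⟨A, hA, hAeq⟩ := Finset.exists_mem_eq_sup'
      (⟨∅, by simp⟩ : (Finset.univ.powerset.filter
        (fun A : Finset (Fin N) => A.card ≤ K)).Nonempty) F
    simp only [Finset.mem_filter, Finset.mem_powerset] at hA
    refine ⟨fun t i => decide (t = 0 ∧ i ∈ A), ?_, ?_⟩
    · intro t
      rw [pulls_eq]
      rcases Nat.eq_zero_or_pos t with rfl | ht
      · have : (Finset.univ.filter (fun i => decide ((0:ℕ) = 0 ∧ i ∈ A) = true)) = A := by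
          ext i; simp
        rw [this]; exact hA.2
      · have : (Finset.univ.filter (fun i => decide (t = 0 ∧ i ∈ A) = true)) = ∅ := by
          ext i; simp [ht.ne']
        rw [this]; simp
    · rw [tsum_eq hN, hAeq]
      congr 1
      ext i; simp
  · rintro x ⟨a, ha, rfl⟩
    rw [tsum_eq hN]
    apply Finset.le_sup'
    simp only [Finset.mem_filter, Finset.mem_powerset]
    refine ⟨Finset.filter_subset _ _, ?_⟩
    rw [← pulls_eq]; exact ha 0
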